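/- Let φ be a Leibniz 2-cocycle on the twisted Schrödinger-Virasoro algebra with φ(L_0, ·) and φ(·, L_0) vanishing on all basis elements, and set c_2 = −φ(L_1, M_{−1}), c_1 = φ(L_2, M_{−2})/2. Then φ(L_n, M_{−n}) = n(n−1)c_1 + n(n−2)c_2 for all n ∈ ℤ. -/

import Mathlib

abbrev B : Type := ℤ ⊕ ℤ ⊕ ℤ
abbrev V : Type := B →₀ ℂ

noncomputable def Lg (n : ℤ) : V := Finsupp.single (Sum.inl n) 1
noncomputable def Yg (n : ℤ) : V := Finsupp.single (Sum.inr (Sum.inl n)) 1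
noncomputable def Mg (n : ℤ) : V := Finsupp.single (Sum.inr (Sum.inr n)) 1

/-- Bracket on basis elements of the twisted Schrödinger–Virasoro algebra. -/
noncomputable def brB : B → B → V
  | Sum.inl n, Sum.inl m => ((m : ℂ) - n) • Lg (n + m)
  | Sum.inl n, Sum.inr (Sum.inl m) => ((m : ℂ) - n / 2) • Yg (n + m)
  | Sum.inl n, Sum.inr (Sum.inr p) => (p : ℂ) • Mg (n + p)
  | Sum.inr (Sum.inl m), Sum.inl n => -(((m : ℂ) - n / 2) • Yg (n + m))
  | Sum.inr (Sum.inr p), Sum.inl n => -((p : ℂ) • Mg (n + p))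
  | Sum.inr (Sum.inl m), Sum.inr (Sum.inl m') => ((m' : ℂ) - m) • Mg (m + m')
  | _, _ => 0

/-- The bilinear extension of the bracket to the whole space. -/
noncomputable def bk : V →ₗ[ℂ] V →ₗ[ℂ] V :=
  Finsupp.lsum ℂ fun a => LinearMap.toSpanSingleton ℂ (V →ₗ[ℂ] V)
    (Finsupp.lsum ℂ fun b => LinearMap.toSpanSingleton ℂ V (brB a b))

/-- `φ` is a Leibniz 2-cocycle on the twisted Schrödinger–Virasoro algebra. -/
def IsLeibnizCocycle (φ : V →ₗ[ℂ] V →ₗ[ℂ] ℂ) : Prop :=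
  ∀ x y z : V, φ x (bk y z) = φ (bk x y) z - φ (bk x z) y

lemma bk_single (a b : B) :
    bk (Finsupp.single a 1) (Finsupp.single b 1) = brB a b := by
  simp [bk, Finsupp.lsum_single, LinearMap.toSpanSingleton_apply]

lemma bkLL (n m : ℤ) : bk (Lg n) (Lg m) = ((m : ℂ) - n) • Lg (n + m) :=
  bk_single (Sum.inl n) (Sum.inl m)

lemma bkLM (n p : ℤ) : bk (Lg n) (Mg p) = (p : ℂ) • Mg (n + p) :=
  bk_single (Sum.inl n) (Sum.inr (Sum.inr p))

lemma bkML (p n : ℤ) : bk (Mg p) (Lg n) = -((p : ℂ) • Mg (n + p)) :=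
  bk_single (Sum.inr (Sum.inr p)) (Sum.inl n)

theorem stmt11 (φ : V →ₗ[ℂ] V →ₗ[ℂ] ℂ) (hco : IsLeibnizCocycle φ)
    (hL0 : ∀ b : B, φ (Lg 0) (Finsupp.single b 1) = 0 ∧ φ (Finsupp.single b 1) (Lg 0) = 0)
    (c1 c2 : ℂ) (hc2 : c2 = - φ (Lg 1) (Mg (-1))) (hc1 : c1 = φ (Lg 2) (Mg (-2)) / 2) :
    ∀ n : ℤ, φ (Lg n) (Mg (-n)) = (n : ℂ) * ((n : ℂ) - 1) * c1 + (n : ℂ) * ((n : ℂ) - 2) * c2 := by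
  have hφL0M : ∀ p : ℤ, φ (Lg 0) (Mg p) = 0 := fun p => (hL0 (Sum.inr (Sum.inr p))).1
  have key : ∀ n m p : ℤ, (p : ℂ) * φ (Lg n) (Mg (m + p)) =
      ((m : ℂ) - n) * φ (Lg (n + m)) (Mg p) - (p : ℂ) * φ (Mg (n + p)) (Lg m) := by
    intro n m p
    have h := hco (Lg n) (Lg m) (Mg p)
    rw [bkLL, bkLM, bkLM] at h
    simpa [map_smul, smul_eq_mul] using h
  have anti : ∀ m p : ℤ, (p : ℂ) * φ (Mg p) (Lg m) = (m : ℂ) * φ (Lg m) (Mg p) := by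
    intro m p
    have h := hco (Lg 0) (Mg p) (Lg m)
    rw [bkML, bkLM, bkLL] at h
    simp [map_smul, smul_eq_mul, hφL0M] at h
    linear_combination -h
  have hrec : ∀ n m : ℤ, m ≠ 0 →
      ((m : ℂ) - n) * φ (Lg (n + m)) (Mg (-(n + m))) =
      ((m : ℂ) + n) * (φ (Lg m) (Mg (-m)) - φ (Lg n) (Mg (-n))) := by
    intro n m hm
    have hm' : (m : ℂ) ≠ 0 := Int.cast_ne_zero.mpr hm
    have h1 := key n m (-(n + m))
    have e1 : m + -(n + m) = -n := by ring
    have e2 : n + -(n + m) = -m := by ring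
    rw [e1, e2] at h1
    have h2 := anti m (-m)
    have h3 : φ (Mg (-m)) (Lg m) = - φ (Lg m) (Mg (-m)) := by
      apply mul_left_cancel₀ hm'
      push_cast at h2
      linear_combination -h2
    rw [h3] at h1
    push_cast at h1
    linear_combination -h1
  have hf1 : φ (Lg 1) (Mg (-1)) = -c2 := by rw [hc2]; ring
  have hf2 : φ (Lg 2) (Mg (-2)) = 2 * c1 := by rw [hc1]; ring
  have hfm1 : φ (Lg (-1)) (Mg 1) = 2 * c1 + 3 * c2 := by
    have h := hrec (-1) 2 (by norm_num)
    norm_num at h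
    linear_combination h + hf2 - 3 * hf1
  have hup : ∀ k : ℕ, φ (Lg (2 + k)) (Mg (-(2 + (k : ℤ)))) =
      ((2 + (k : ℂ))) * ((2 + (k : ℂ)) - 1) * c1 + ((2 + (k : ℂ))) * ((2 + (k : ℂ)) - 2) * c2 := by
    intro k
    induction k with
    | zero =>
      norm_num
      linear_combination hf2
    | succ k ih =>
      have h := hrec (2 + k) 1 one_ne_zero
      have e : (2 : ℤ) + (k : ℤ) + 1 = 2 + ((k + 1 : ℕ) : ℤ) := by push_cast; ring
      rw [e] at h
      rw [ih, hf1] at h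
      have hne : (1 : ℂ) - (2 + (k : ℂ)) ≠ 0 := by
        intro hh
        exact Nat.cast_add_one_ne_zero (R := ℂ) k (by linear_combination -hh)
      apply mul_left_cancel₀ hne
      push_cast at h ⊢
      linear_combination h
  have hdn : ∀ k : ℕ, φ (Lg (-1 - k)) (Mg (-(-1 - (k : ℤ)))) =
      ((-1 - (k : ℂ))) * ((-1 - (k : ℂ)) - 1) * c1 + ((-1 - (k : ℂ))) * ((-1 - (k : ℂ)) - 2) * c2 := by
    intro k
    induction k with
    | zero =>
      norm_num
      linear_combination hfm1
    | succ k ih =>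
      have h := hrec (-2 - k) 1 one_ne_zero
      have e : (-2 : ℤ) - (k : ℤ) + 1 = -1 - (k : ℤ) := by ring
      rw [e] at h
      rw [ih, hf1] at h
      have e2 : (-1 : ℤ) - ((k + 1 : ℕ) : ℤ) = -2 - (k : ℤ) := by push_cast; ring
      rw [e2]
      have hne : (-1 : ℂ) - (k : ℂ) ≠ 0 := by
        intro hh
        exact Nat.cast_add_one_ne_zero (R := ℂ) k (by linear_combination -hh)
      apply mul_left_cancel₀ hne
      push_cast at h ⊢
      linear_combination h
  intro n
  obtain hn | hn | hn | hn : n ≤ -1 ∨ n = 0 ∨ n = 1 ∨ 2 ≤ n := by omega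
  · obtain ⟨k, rfl⟩ : ∃ k : ℕ, n = -1 - k := ⟨(-1 - n).toNat, by omega⟩
    have h := hdn k
    push_cast at h ⊢
    linear_combination h
  · subst hn
    simpa using hφL0M 0
  · subst hn
    push_cast
    linear_combination hf1
  · obtain ⟨k, rfl⟩ : ∃ k : ℕ, n = 2 + k := ⟨(n - 2).toNat, by omega⟩
    have h := hup k
    push_cast at h ⊢
    linear_combination h
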